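/- Let w, q : ℝ → ℂ with w differentiable and nonvanishing, q continuous, and p = w'/w. Let y_a, y_b : ℝ → ℂ be twice differentiable solutions of y'' + p·y' + q·y = 0. Define Z₁ = (y_a·y_b + w²·y_a'·y_b', i·w·(y_a·y_b' + y_a'·y_b), i·(y_a·y_b − w²·y_a'·y_b')). Then Z₁ satisfies Z₁' = −Ω̂₀·Z₁, where Ω̂₀ is the 3×3 matrix with rows (0, i·(1/w − w·q), 0), (−i·(1/w − w·q), 0, 1/w + w·q), (0, −(1/w + w·q), 0). -/

import Mathlib

/-- Columnwise statement that 𝐙₁ = S·Sym²(𝐗₁) is a fundamental matrix of the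
second 𝔰𝔬(3,ℂ) form Z₁' = −Ω̂₀·Z₁. -/
theorem so3_second_form_fundamental_matrix_columns
    (w q p ya yb : ℝ → ℂ)
    (hw : Differentiable ℝ w) (hw0 : ∀ x, w x ≠ 0) (hq : Continuous q)
    (hp : ∀ x, p x = deriv w x / w x)
    (hya : Differentiable ℝ ya) (hya' : Differentiable ℝ (deriv ya))
    (hyb : Differentiable ℝ yb) (hyb' : Differentiable ℝ (deriv yb))
    (hodea : ∀ x, deriv (deriv ya) x + p x * deriv ya x + q x * ya x = 0)
    (hodeb : ∀ x, deriv (deriv yb) x + p x * deriv yb x + q x * yb x = 0)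
    (Z₁ : ℝ → Fin 3 → ℂ) (Ωh₀ : ℝ → Matrix (Fin 3) (Fin 3) ℂ)
    (hZ : ∀ x, Z₁ x = ![ya x * yb x + w x ^ 2 * (deriv ya x * deriv yb x),
        Complex.I * w x * (ya x * deriv yb x + deriv ya x * yb x),
        Complex.I * (ya x * yb x - w x ^ 2 * (deriv ya x * deriv yb x))])
    (hΩ : ∀ x, Ωh₀ x = !![0, Complex.I * (1 / w x - w x * q x), 0;
        -Complex.I * (1 / w x - w x * q x), 0, 1 / w x + w x * q x;
        0, -(1 / w x + w x * q x), 0]) :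
    ∀ x i, deriv (fun t => Z₁ t i) x = -(((Ωh₀ x).mulVec (Z₁ x)) i) := by
  intro x i
  have hwx := (hw x).hasDerivAt
  have hax := (hya x).hasDerivAt
  have ha'x := (hya' x).hasDerivAt
  have hbx := (hyb x).hasDerivAt
  have hb'x := (hyb' x).hasDerivAt
  have ha2 : deriv (deriv ya) x = -(deriv w x * deriv ya x / w x + q x * ya x) := by
    have h := hodea x
    rw [hp x] at h
    field_simp [hw0 x] at h ⊢
    linear_combination h
  have hb2 : deriv (deriv yb) x = -(deriv w x * deriv yb x / w x + q x * yb x) := by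
    have h := hodeb x
    rw [hp x] at h
    field_simp [hw0 x] at h ⊢
    linear_combination h
  have hw2 : HasDerivAt (fun t => w t ^ 2) (deriv w x * w x + w x * deriv w x) x := by
    simpa [pow_two] using hwx.fun_mul hwx
  have h0 := (hax.fun_mul hbx).fun_add (hw2.fun_mul (ha'x.fun_mul hb'x))
  have h1 := (hwx.const_mul Complex.I).fun_mul ((hax.fun_mul hb'x).fun_add (ha'x.fun_mul hbx))
  have h2 := ((hax.fun_mul hbx).fun_sub (hw2.fun_mul (ha'x.fun_mul hb'x))).const_mul Complex.I
  fin_cases i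
  · show deriv (fun t => Z₁ t 0) x = -(((Ωh₀ x).mulVec (Z₁ x)) 0)
    have : (fun t => Z₁ t 0) = fun t => ya t * yb t + w t ^ 2 * (deriv ya t * deriv yb t) := by
      funext t; rw [hZ t]; simp
    rw [this, h0.deriv, hΩ x, hZ x]
    simp [Matrix.mulVec, dotProduct, Fin.sum_univ_three]
    rw [ha2, hb2]
    field_simp [hw0 x]
    ring
    linear_combination ((1 - w x ^ 2 * q x) * (ya x * deriv yb x + deriv ya x * yb x)) * Complex.I_sq
  · show deriv (fun t => Z₁ t 1) x = -(((Ωh₀ x).mulVec (Z₁ x)) 1)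
    have : (fun t => Z₁ t 1) = fun t => Complex.I * w t * (ya t * deriv yb t + deriv ya t * yb t) := by
      funext t; rw [hZ t]; simp
    rw [this, h1.deriv, hΩ x, hZ x]
    simp [Matrix.mulVec, dotProduct, Fin.sum_univ_three]
    rw [ha2, hb2]
    field_simp [hw0 x]
    ring
  · show deriv (fun t => Z₁ t 2) x = -(((Ωh₀ x).mulVec (Z₁ x)) 2)
    have : (fun t => Z₁ t 2) = fun t => Complex.I * (ya t * yb t - w t ^ 2 * (deriv ya t * deriv yb t)) := by
      funext t; rw [hZ t]; simp
    rw [this, h2.deriv, hΩ x, hZ x]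
    simp [Matrix.mulVec, dotProduct, Fin.sum_univ_three]
    rw [ha2, hb2]
    field_simp [hw0 x]
    ring
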